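/- Every nonempty open quiver locus Ω°_r ⊆ Hom is a single orbit of the change-of-basis action of GL on Hom; conversely, every GL-orbit on Hom equals Ω°_r for exactly one rank array r, namely the array r_{ij} = rank(φ_{i→j}) of composite ranks of any of its elements. -/

import Mathlib

/-- The space of representations of the equioriented `A_{n+1}` quiver on `V 0, …, V n`:
tuples of linear maps `φ i : V i →ₗ V (i+1)` for `0 ≤ i < n`. -/
abbrev HomSp (n : ℕ) (V : ℕ → Type*) [∀ i, AddCommGroup (V i)] [∀ i, Module ℂ (V i)] : Type _ :=
  ∀ i : Fin n, V (i : ℕ) →ₗ[ℂ] V ((i : ℕ) + 1)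

/-- The composite map `φ_{i → j} : V i → V j` (the identity when `i = j`,
junk when `j < i` or the needed maps are out of range). -/
def chainComp {n : ℕ} {V : ℕ → Type*} [∀ i, AddCommGroup (V i)] [∀ i, Module ℂ (V i)]
    (φ : HomSp n V) (i : ℕ) : (j : ℕ) → (V i →ₗ[ℂ] V j)
  | 0 => if h : i = 0 then (by subst h; exact LinearMap.id) else 0
  | (j + 1) =>
      if h : i = j + 1 then (by subst h; exact LinearMap.id)
      else if hj : j < n then (φ ⟨j, hj⟩).comp (chainComp φ i j) else 0

/-- Two quiver representations lie in the same orbit of the change-of-basis action of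
`GL = GL(V 0) × ⋯ × GL(V n)`, i.e. are isomorphic as quiver representations. -/
def sameOrbit {n : ℕ} {V : ℕ → Type*} [∀ i, AddCommGroup (V i)] [∀ i, Module ℂ (V i)]
    (φ ψ : HomSp n V) : Prop :=
  ∃ g : ∀ k : Fin (n + 1), V (k : ℕ) ≃ₗ[ℂ] V (k : ℕ),
    ∀ i : Fin n, (g i.succ).toLinearMap.comp (φ i) = (ψ i).comp (g i.castSucc).toLinearMap

/-- `φ` lies in the open quiver locus `Ω°_r`: every composite `φ_{i→j}` (`0 ≤ i ≤ j ≤ n`)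
has rank exactly `r i j`. -/
def inOpenLocus {n : ℕ} {V : ℕ → Type*} [∀ i, AddCommGroup (V i)] [∀ i, Module ℂ (V i)]
    (r : ℕ → ℕ → ℕ) (φ : HomSp n V) : Prop :=
  ∀ i j : ℕ, i ≤ j → j ≤ n →
    Module.finrank ℂ (LinearMap.range (chainComp φ i j)) = r i j


section Aux
variable {n : ℕ} {V : ℕ → Type*} [∀ i, AddCommGroup (V i)] [∀ i, Module ℂ (V i)]

lemma chainComp_self (φ : HomSp n V) (i : ℕ) : chainComp φ i i = LinearMap.id := by
  cases i <;> simp [chainComp]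

lemma chainComp_succ (φ : HomSp n V) {i j : ℕ} (h1 : i ≤ j) (h2 : j < n) :
    chainComp φ i (j+1) = (φ ⟨j, h2⟩).comp (chainComp φ i j) := by
  rw [chainComp, dif_neg (by omega), dif_pos h2]

lemma chainComp_left (φ : HomSp n V) {i j : ℕ} (h1 : i < j) (h2 : j ≤ n) :
    chainComp φ i j = (chainComp φ (i+1) j).comp (φ ⟨i, lt_of_lt_of_le h1 h2⟩) := by
  induction j with
  | zero => omega
  | succ j ih =>
    rcases Nat.lt_or_ge i j with hij | hij
    · rw [chainComp_succ φ (by omega) (by omega), chainComp_succ φ (by omega) (by omega),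
        ih hij (by omega), LinearMap.comp_assoc]
    · have : i = j := by omega
      subst this
      rw [chainComp_succ φ le_rfl (by omega), chainComp_self, chainComp_self]
      rfl

lemma ker_chain_mono (φ : HomSp n V) {i j j' : ℕ} (h1 : i ≤ j) (h2 : j ≤ j') (h3 : j' ≤ n) :
    LinearMap.ker (chainComp φ i j) ≤ LinearMap.ker (chainComp φ i j') := by
  induction j' with
  | zero =>
      have : j = 0 := by omega
      subst this; exact le_rfl
  | succ j' ih =>
    rcases Nat.lt_or_ge j (j'+1) with h | h
    · refine le_trans (ih (by omega) (by omega)) ?_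
      rw [chainComp_succ φ (by omega) (by omega)]
      intro x hx
      simp only [LinearMap.mem_ker] at *
      simp [LinearMap.comp_apply, hx]
    · have : j = j' + 1 := by omega
      subst this; exact le_rfl


open Module LinearMap

universe u

lemma finrank_map_eq_of_ker_eq {U W : Type*} [AddCommGroup U] [Module ℂ U]
    [AddCommGroup W] [Module ℂ W] [FiniteDimensional ℂ U]
    {α β : U →ₗ[ℂ] W} (hker : LinearMap.ker α = LinearMap.ker β) (K : Submodule ℂ U) :
    finrank ℂ (K.map α) = finrank ℂ (K.map β) := by
  have h1 := LinearMap.finrank_range_add_finrank_ker (α.domRestrict K)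
  have h2 := LinearMap.finrank_range_add_finrank_ker (β.domRestrict K)
  rw [LinearMap.ker_domRestrict, LinearMap.range_domRestrict] at h1 h2
  rw [hker] at h1
  omega

/-- Key extension lemma. -/
theorem extend_lemma (m : ℕ) : ∀ {U W : Type u} [AddCommGroup U] [Module ℂ U]
    [AddCommGroup W] [Module ℂ W] [FiniteDimensional ℂ U] [FiniteDimensional ℂ W]
    (α β : U →ₗ[ℂ] W) (K : ℕ → Submodule ℂ U) (S S' : ℕ → Submodule ℂ W),
    LinearMap.ker α = LinearMap.ker β →
    (∀ a b, a ≤ b → b < m → S a ≤ S b) →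
    (∀ a b, a ≤ b → b < m → S' a ≤ S' b) →
    (∀ a < m, S a ⊓ LinearMap.range α = (K a).map α) →
    (∀ a < m, S' a ⊓ LinearMap.range β = (K a).map β) →
    (∀ a < m, finrank ℂ (S a) = finrank ℂ (S' a)) →
    ∃ g : W ≃ₗ[ℂ] W, g.toLinearMap.comp α = β ∧
      ∀ a < m, (S a).map g.toLinearMap = S' a := by
  induction m with
  | zero =>
    intro U W _ _ _ _ _ _ α β K S S' hker _ _ _ _ _
    set e : (LinearMap.range α : Type u) ≃ₗ[ℂ] LinearMap.range β :=
      (α.quotKerEquivRange.symm.trans (Submodule.quotEquivOfEq _ _ hker)).trans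
        β.quotKerEquivRange with he
    obtain ⟨C, hC⟩ := Submodule.exists_isCompl (LinearMap.range α)
    obtain ⟨C', hC'⟩ := Submodule.exists_isCompl (LinearMap.range β)
    have hd : finrank ℂ C = finrank ℂ C' := by
      have h1 := Submodule.finrank_sup_add_finrank_inf_eq (LinearMap.range α) C
      have h2 := Submodule.finrank_sup_add_finrank_inf_eq (LinearMap.range β) C'
      rw [hC.sup_eq_top, hC.inf_eq_bot] at h1
      rw [hC'.sup_eq_top, hC'.inf_eq_bot] at h2
      have h3 : finrank ℂ (LinearMap.range α) = finrank ℂ (LinearMap.range β) :=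
        e.finrank_eq
      simp [finrank_bot] at h1 h2
      omega
    have c : (C : Type u) ≃ₗ[ℂ] C' := LinearEquiv.ofFinrankEq _ _ hd
    set g : W ≃ₗ[ℂ] W := ((Submodule.prodEquivOfIsCompl _ _ hC).symm.trans (e.prodCongr c)).trans
      (Submodule.prodEquivOfIsCompl _ _ hC') with hg
    refine ⟨g, ?_, fun a ha => absurd ha (Nat.not_lt_zero a)⟩
    ext u
    rw [hg]
    simp only [LinearMap.comp_apply, LinearEquiv.coe_coe, LinearEquiv.trans_apply]
    have hxumem : α u ∈ LinearMap.range α := LinearMap.mem_range_self α u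
    set xu : ↥(LinearMap.range α) := ⟨α u, hxumem⟩ with hxu
    have h4 := Submodule.prodEquivOfIsCompl_symm_apply_left _ _ hC xu
    rw [show α u = (xu : W) from rfl, h4]
    have h5 : e xu = ⟨β u, LinearMap.mem_range_self β u⟩ := by
      have hx2 : xu = α.quotKerEquivRange (Submodule.Quotient.mk u) :=
        Subtype.ext (α.quotKerEquivRange_apply_mk u).symm
      rw [hx2]
      simp only [he, LinearEquiv.trans_apply, LinearEquiv.symm_apply_apply,
        Submodule.quotEquivOfEq_mk]
      exact Subtype.ext (β.quotKerEquivRange_apply_mk u)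
    have h6 : (e.prodCongr c) (xu, 0) = (e xu, c 0) := rfl
    rw [Submodule.coe_prodEquivOfIsCompl', h6, h5, map_zero]
    simp
  | succ m ih =>
    intro U W _ _ _ _ _ _ α β K S S' hker hmono hmono' hSK hSK' hdim
    obtain ⟨D, hD⟩ := Submodule.exists_isCompl (S 0 ⊓ LinearMap.range α)
    obtain ⟨D', hD'⟩ := Submodule.exists_isCompl (S' 0 ⊓ LinearMap.range β)
    set C : Submodule ℂ W := D ⊓ S 0 with hCdef
    set C' : Submodule ℂ W := D' ⊓ S' 0 with hC'def
    have hCS : C ≤ S 0 := inf_le_right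
    have hC'S : C' ≤ S' 0 := inf_le_right
    -- S 0 = (S 0 ⊓ range α) ⊔ C
    have hsplit : (S 0 ⊓ LinearMap.range α) ⊔ C = S 0 := by
      rw [hCdef, inf_comm D (S 0), sup_comm (S 0 ⊓ LinearMap.range α) (S 0 ⊓ D),
        inf_sup_assoc_of_le _ inf_le_left, sup_comm D (S 0 ⊓ LinearMap.range α),
        hD.sup_eq_top, inf_top_eq]
    have hsplit' : (S' 0 ⊓ LinearMap.range β) ⊔ C' = S' 0 := by
      rw [hC'def, inf_comm D' (S' 0), sup_comm (S' 0 ⊓ LinearMap.range β) (S' 0 ⊓ D'),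
        inf_sup_assoc_of_le _ inf_le_left, sup_comm D' (S' 0 ⊓ LinearMap.range β),
        hD'.sup_eq_top, inf_top_eq]
    have hdisj : C ⊓ (S 0 ⊓ LinearMap.range α) = ⊥ := by
      rw [le_bot_iff.symm, ← hD.inf_eq_bot]
      intro x hx
      exact ⟨hx.2, hx.1.1⟩
    have hdisj' : C' ⊓ (S' 0 ⊓ LinearMap.range β) = ⊥ := by
      rw [le_bot_iff.symm, ← hD'.inf_eq_bot]
      intro x hx
      exact ⟨hx.2, hx.1.1⟩
    have hCrange : C ⊓ LinearMap.range α = ⊥ := by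
      rw [le_bot_iff.symm, ← hdisj]
      intro x hx
      exact ⟨hx.1, hCS hx.1, hx.2⟩
    have hCrange' : C' ⊓ LinearMap.range β = ⊥ := by
      rw [le_bot_iff.symm, ← hdisj']
      intro x hx
      exact ⟨hx.1, hC'S hx.1, hx.2⟩
    -- dims of C and C'
    have hd : finrank ℂ C = finrank ℂ C' := by
      have h1 := Submodule.finrank_sup_add_finrank_inf_eq (S 0 ⊓ LinearMap.range α) C
      have h2 := Submodule.finrank_sup_add_finrank_inf_eq (S' 0 ⊓ LinearMap.range β) C'
      rw [hsplit, inf_comm, hdisj] at h1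
      rw [hsplit', inf_comm, hdisj'] at h2
      have h3 : finrank ℂ (S 0 ⊓ LinearMap.range α : Submodule ℂ W)
          = finrank ℂ (S' 0 ⊓ LinearMap.range β : Submodule ℂ W) := by
        rw [hSK 0 (by omega), hSK' 0 (by omega)]
        exact finrank_map_eq_of_ker_eq hker (K 0)
      have h5 := hdim 0 (by omega)
      simp [finrank_bot] at h1 h2
      omega
    have c : (C : Type u) ≃ₗ[ℂ] C' := LinearEquiv.ofFinrankEq _ _ hd
    set αh : U × C →ₗ[ℂ] W := α.coprod C.subtype with hαh
    set βh : U × C →ₗ[ℂ] W := β.coprod (C'.subtype.comp c.toLinearMap) with hβh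
    have hrangeαh : LinearMap.range αh = LinearMap.range α ⊔ C := by
      rw [hαh, LinearMap.range_coprod, Submodule.range_subtype]
    have hrangeβh : LinearMap.range βh = LinearMap.range β ⊔ C' := by
      rw [hβh, LinearMap.range_coprod, LinearMap.range_comp, LinearEquiv.range,
        Submodule.map_subtype_top]
    have hkerh : LinearMap.ker αh = LinearMap.ker βh := by
      have e1 : LinearMap.ker αh = (LinearMap.ker α).prod ⊥ := by
        ext ⟨u, x⟩
        simp only [LinearMap.mem_ker, hαh, LinearMap.coprod_apply, Submodule.mem_prod,
          Submodule.mem_bot, Submodule.coe_subtype]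
        constructor
        · intro h
          have hx : (x : W) ∈ C ⊓ LinearMap.range α := by
            exact ⟨x.2, ⟨-u, by rw [map_neg]; exact neg_eq_of_add_eq_zero_right h⟩⟩
          rw [hCrange] at hx
          have hx0 : x = 0 := Subtype.ext hx
          rw [hx0] at h ⊢
          simp only [Submodule.coe_zero, add_zero] at h
          exact ⟨h, rfl⟩
        · rintro ⟨h1, h2⟩
          rw [h2, h1]
          simp
      have e2 : LinearMap.ker βh = (LinearMap.ker β).prod ⊥ := by
        ext ⟨u, x⟩
        simp only [LinearMap.mem_ker, hβh, LinearMap.coprod_apply, Submodule.mem_prod,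
          Submodule.mem_bot, LinearMap.comp_apply, Submodule.coe_subtype]
        constructor
        · intro h
          have hx : (c x : W) ∈ C' ⊓ LinearMap.range β := by
            exact ⟨(c x).2, ⟨-u, by rw [map_neg]; exact neg_eq_of_add_eq_zero_right h⟩⟩
          rw [hCrange'] at hx
          have hx0 : x = 0 := by
            have : c x = 0 := Subtype.ext hx
            simpa using congrArg c.symm this
          rw [hx0] at h ⊢
          simp only [map_zero, Submodule.coe_zero, add_zero] at h
          exact ⟨h, rfl⟩
        · rintro ⟨h1, h2⟩
          rw [h2, h1]
          simp
      rw [e1, e2, hker]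
    have keyα : ∀ a < m + 1, S a ⊓ LinearMap.range αh = ((K a).prod ⊤).map αh := by
      intro a ha
      have hCa : C ≤ S a := le_trans hCS (hmono 0 a (by omega) ha)
      rw [hrangeαh, ← inf_sup_assoc_of_le _ hCa, hSK a ha, hαh,
        LinearMap.map_coprod_prod, Submodule.map_subtype_top]
    have keyβ : ∀ a < m + 1, S' a ⊓ LinearMap.range βh = ((K a).prod ⊤).map βh := by
      intro a ha
      have hCa : C' ≤ S' a := le_trans hC'S (hmono' 0 a (by omega) ha)
      rw [hrangeβh, ← inf_sup_assoc_of_le _ hCa, hSK' a ha, hβh,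
        LinearMap.map_coprod_prod]
      congr 1
      rw [Submodule.map_comp, Submodule.map_top, LinearEquiv.range, Submodule.map_subtype_top]
    obtain ⟨g, hg1, hg2⟩ := ih αh βh (fun a => (K (a + 1)).prod ⊤)
      (fun a => S (a + 1)) (fun a => S' (a + 1)) hkerh
      (fun a b hab hb => hmono (a+1) (b+1) (by omega) (by omega))
      (fun a b hab hb => hmono' (a+1) (b+1) (by omega) (by omega))
      (fun a ha => keyα (a+1) (by omega))
      (fun a ha => keyβ (a+1) (by omega))
      (fun a ha => hdim (a+1) (by omega))
    refine ⟨g, ?_, ?_⟩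
    · ext u
      have h0 := DFunLike.congr_fun hg1 (u, 0)
      simpa [hαh, hβh] using h0
    · intro a ha
      match a with
      | Nat.succ a' => exact hg2 a' (by omega)
      | 0 =>
        have hS0 : Submodule.map αh ((K 0).prod ⊤) = S 0 := by
          rw [hαh, LinearMap.map_coprod_prod, Submodule.map_subtype_top,
            ← hSK 0 (by omega), hsplit]
        have hS0' : Submodule.map βh ((K 0).prod ⊤) = S' 0 := by
          rw [hβh, LinearMap.map_coprod_prod, Submodule.map_comp, Submodule.map_top,
            LinearEquiv.range, Submodule.map_subtype_top, ← hSK' 0 (by omega), hsplit']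
        rw [← hS0, ← Submodule.map_comp, hg1, hS0']

section MainLemma

variable {n : ℕ} {V : ℕ → Type*} [∀ i, AddCommGroup (V i)] [∀ i, Module ℂ (V i)]

lemma ker_inf_range (φ : HomSp n V) {k j : ℕ} (h1 : k < j) (h2 : j ≤ n) (hk : k < n) :
    LinearMap.ker (chainComp φ (k+1) j) ⊓ LinearMap.range (φ ⟨k, hk⟩)
      = (LinearMap.ker (chainComp φ k j)).map (φ ⟨k, hk⟩) := by
  have hfact : chainComp φ k j = (chainComp φ (k+1) j).comp (φ ⟨k, hk⟩) := by
    rw [chainComp_left φ h1 h2]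
  ext x
  simp only [Submodule.mem_inf, LinearMap.mem_ker, LinearMap.mem_range, Submodule.mem_map]
  constructor
  · rintro ⟨hk0, u, rfl⟩
    refine ⟨u, ?_, rfl⟩
    show chainComp φ k j u = 0
    rw [hfact]
    exact hk0
  · rintro ⟨u, hu, rfl⟩
    have : chainComp φ k j u = 0 := hu
    rw [hfact] at this
    exact ⟨this, u, rfl⟩

lemma chain_intertwine {φ ψ : HomSp n V} (g : ∀ k : Fin (n+1), V (k : ℕ) ≃ₗ[ℂ] V (k : ℕ))
    (hg : ∀ i : Fin n, (g i.succ).toLinearMap.comp (φ i) = (ψ i).comp (g i.castSucc).toLinearMap)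
    {i j : ℕ} (h1 : i ≤ j) (h2 : j ≤ n) :
    (g ⟨j, by omega⟩).toLinearMap.comp (chainComp φ i j)
      = (chainComp ψ i j).comp (g ⟨i, by omega⟩).toLinearMap := by
  induction j with
  | zero =>
    have : i = 0 := by omega
    subst this
    rw [chainComp_self, chainComp_self]
    rfl
  | succ j ih =>
    rcases Nat.lt_or_ge i (j+1) with h | h
    · have hjn : j < n := by omega
      have hg' : (g ⟨j+1, by omega⟩).toLinearMap.comp (φ ⟨j, hjn⟩)
          = (ψ ⟨j, hjn⟩).comp (g ⟨j, by omega⟩).toLinearMap := hg ⟨j, hjn⟩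
      rw [chainComp_succ φ (by omega) hjn, chainComp_succ ψ (by omega) hjn,
        ← LinearMap.comp_assoc, hg', LinearMap.comp_assoc, ih (by omega) (by omega),
        ← LinearMap.comp_assoc]
    · have : i = j + 1 := by omega
      subst this
      rw [chainComp_self, chainComp_self]
      rfl

lemma sameOrbit_rank [∀ i, FiniteDimensional ℂ (V i)] {φ ψ : HomSp n V} (h : sameOrbit φ ψ)
    {i j : ℕ} (h1 : i ≤ j) (h2 : j ≤ n) :
    Module.finrank ℂ (LinearMap.range (chainComp ψ i j))
      = Module.finrank ℂ (LinearMap.range (chainComp φ i j)) := by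
  obtain ⟨g, hg⟩ := h
  have hc := chain_intertwine g hg h1 h2
  have h3 : LinearMap.range (chainComp ψ i j)
      = (LinearMap.range (chainComp φ i j)).map (g ⟨j, by omega⟩).toLinearMap := by
    ext x
    simp only [LinearMap.mem_range, Submodule.mem_map]
    constructor
    · rintro ⟨u, rfl⟩
      refine ⟨chainComp φ i j ((g ⟨i, by omega⟩).symm u), ⟨_, rfl⟩, ?_⟩
      have := DFunLike.congr_fun hc ((g ⟨i, by omega⟩).symm u)
      simp only [LinearMap.comp_apply, LinearEquiv.coe_coe,
        LinearEquiv.apply_symm_apply] at this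
      exact this
    · rintro ⟨y, ⟨u, rfl⟩, rfl⟩
      refine ⟨(g ⟨i, by omega⟩) u, ?_⟩
      have := DFunLike.congr_fun hc u
      simp only [LinearMap.comp_apply, LinearEquiv.coe_coe] at this
      exact this.symm
  rw [h3, LinearEquiv.finrank_map_eq]

theorem ranks_to_orbit [∀ i, FiniteDimensional ℂ (V i)] (φ ψ : HomSp n V)
    (hr : ∀ i j, i ≤ j → j ≤ n →
      Module.finrank ℂ (LinearMap.range (chainComp φ i j))
        = Module.finrank ℂ (LinearMap.range (chainComp ψ i j))) :
    sameOrbit φ ψ := by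
  have hker_rank : ∀ i j, i ≤ j → j ≤ n →
      Module.finrank ℂ (LinearMap.ker (chainComp φ i j))
        = Module.finrank ℂ (LinearMap.ker (chainComp ψ i j)) := by
    intro i j h1 h2
    have a1 := LinearMap.finrank_range_add_finrank_ker (chainComp φ i j)
    have a2 := LinearMap.finrank_range_add_finrank_ker (chainComp ψ i j)
    have a3 := hr i j h1 h2
    have a4 : Module.finrank ℂ (V i) = Module.finrank ℂ (V i) := rfl
    omega
  suffices H : ∀ k, k ≤ n → ∃ gs : ∀ t : ℕ, V t ≃ₗ[ℂ] V t,
      (∀ i : Fin n, (i : ℕ) < k →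
        (gs ((i : ℕ)+1)).toLinearMap.comp (φ i) = (ψ i).comp (gs (i : ℕ)).toLinearMap) ∧
      (∀ j, k ≤ j → j ≤ n →
        (LinearMap.ker (chainComp φ k j)).map (gs k).toLinearMap
          = LinearMap.ker (chainComp ψ k j)) by
    obtain ⟨gs, hg, _⟩ := H n le_rfl
    exact ⟨fun m => gs m, fun i => hg i i.isLt⟩
  intro k
  induction k with
  | zero =>
    intro _
    obtain ⟨g, hgc, hgS⟩ := extend_lemma (n+1) (0 : V 0 →ₗ[ℂ] V 0) (0 : V 0 →ₗ[ℂ] V 0)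
      (fun _ => ⊥)
      (fun j => LinearMap.ker (chainComp φ 0 j)) (fun j => LinearMap.ker (chainComp ψ 0 j))
      rfl
      (fun a b hab hb => ker_chain_mono φ (Nat.zero_le a) hab (by omega))
      (fun a b hab hb => ker_chain_mono ψ (Nat.zero_le a) hab (by omega))
      (fun a ha => by simp)
      (fun a ha => by simp)
      (fun a ha => hker_rank 0 a (Nat.zero_le a) (by omega))
    refine ⟨fun t => match t with | 0 => g | (t+1) => LinearEquiv.refl ℂ _,
      fun i hi => absurd hi (by omega), fun j hj0 hjn => hgS j (by omega)⟩
  | succ k ih =>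
    intro hk1
    obtain ⟨gs, hgint, hgker⟩ := ih (by omega)
    have hkn : k < n := by omega
    set α : V k →ₗ[ℂ] V (k+1) := φ ⟨k, hkn⟩ with hα
    set β : V k →ₗ[ℂ] V (k+1) := (ψ ⟨k, hkn⟩).comp (gs k).toLinearMap with hβ
    have e1 : chainComp φ k (k+1) = α := by
      rw [chainComp_succ φ le_rfl hkn, chainComp_self, LinearMap.comp_id]
    have e2 : chainComp ψ k (k+1) = ψ ⟨k, hkn⟩ := by
      rw [chainComp_succ ψ le_rfl hkn, chainComp_self, LinearMap.comp_id]
    have h5 : (LinearMap.ker α).map (gs k).toLinearMap = LinearMap.ker (ψ ⟨k, hkn⟩) := by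
      rw [← e1, ← e2]
      exact hgker (k+1) (by omega) (by omega)
    have h6 : Submodule.comap (gs k).toLinearMap
        (Submodule.map (gs k).toLinearMap (LinearMap.ker α)) = LinearMap.ker α :=
      Submodule.comap_map_eq_of_injective (gs k).injective (LinearMap.ker α)
    have hkerαβ : LinearMap.ker α = LinearMap.ker β := by
      rw [hβ, LinearMap.ker_comp, ← h5, h6]
    have hrβ : LinearMap.range β = LinearMap.range (ψ ⟨k, hkn⟩) := by
      rw [hβ, LinearMap.range_comp, LinearEquiv.range, Submodule.map_top]
    obtain ⟨g, hgc, hgS⟩ := extend_lemma (n - k) α β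
      (fun a => LinearMap.ker (chainComp φ k (k+1+a)))
      (fun a => LinearMap.ker (chainComp φ (k+1) (k+1+a)))
      (fun a => LinearMap.ker (chainComp ψ (k+1) (k+1+a)))
      hkerαβ
      (fun a b hab hb => ker_chain_mono φ (by omega) (by omega) (by omega))
      (fun a b hab hb => ker_chain_mono ψ (by omega) (by omega) (by omega))
      (fun a ha => ker_inf_range φ (by omega) (by omega) hkn)
      (fun a ha => by
        have hmβ : (LinearMap.ker (chainComp φ k (k+1+a))).map β
            = ((LinearMap.ker (chainComp ψ k (k+1+a)))).map (ψ ⟨k, hkn⟩) := by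
          rw [hβ, Submodule.map_comp, hgker (k+1+a) (by omega) (by omega)]
        rw [hrβ, hmβ, ← ker_inf_range ψ (by omega) (by omega) hkn]
      )
      (fun a ha => hker_rank (k+1) (k+1+a) (by omega) (by omega))
    refine ⟨fun t => if h : t = k+1 then h ▸ g else gs t, ?_, ?_⟩
    · intro i hi
      rcases Nat.lt_or_ge (i : ℕ) k with h | h
      · have hne1 : (i : ℕ) + 1 ≠ k + 1 := by omega
        have hne2 : (i : ℕ) ≠ k + 1 := by omega
        simp only [dif_neg hne1, dif_neg hne2]
        exact hgint i h
      · have hieq : i = ⟨k, hkn⟩ := Fin.ext (show (i : ℕ) = k by omega)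
        subst hieq
        simp only [dif_pos rfl, dif_neg (show k ≠ k + 1 by omega)]
        exact hgc
    · intro j hj1 hj2
      obtain ⟨a, rfl⟩ : ∃ a, j = k+1+a := ⟨j - (k+1), by omega⟩
      simp only [dif_pos rfl]
      exact hgS a (by omega)

end MainLemma

end Aux

/-- every nonempty open quiver locus `Ω°_r` is a single `GL`-orbit, every
`GL`-orbit is `Ω°_r` for the rank array `r` of composite ranks of any of its elements, and
this rank array is the unique one whose open quiver locus is the given orbit. -/
theorem openLocus_eq_orbit (n : ℕ) (V : ℕ → Type*) [∀ i, AddCommGroup (V i)]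
    [∀ i, Module ℂ (V i)] [∀ i, FiniteDimensional ℂ (V i)] :
    (∀ r : ℕ → ℕ → ℕ, (∀ i ≤ n, r i i = Module.finrank ℂ (V i)) →
      ∀ φ : HomSp n V, inOpenLocus r φ → ∀ ψ : HomSp n V, (inOpenLocus r ψ ↔ sameOrbit φ ψ))
    ∧ (∀ φ : HomSp n V, ∀ ψ : HomSp n V,
        sameOrbit φ ψ ↔
          inOpenLocus (fun i j => Module.finrank ℂ (LinearMap.range (chainComp φ i j))) ψ)
    ∧ (∀ φ : HomSp n V, ∀ r : ℕ → ℕ → ℕ, (∀ i ≤ n, r i i = Module.finrank ℂ (V i)) →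
        (∀ ψ : HomSp n V, sameOrbit φ ψ ↔ inOpenLocus r ψ) →
        ∀ i j : ℕ, i ≤ j → j ≤ n →
          r i j = Module.finrank ℂ (LinearMap.range (chainComp φ i j))) := by
  have refl_orbit : ∀ φ : HomSp n V, sameOrbit φ φ :=
    fun φ => ⟨fun _ => LinearEquiv.refl ℂ _, fun i => rfl⟩
  refine ⟨?_, ?_, ?_⟩
  · intro r hr φ hφ ψ
    constructor
    · intro hψ
      exact ranks_to_orbit φ ψ (fun i j h1 h2 => by rw [hφ i j h1 h2, hψ i j h1 h2])
    · intro hs i j h1 h2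
      rw [sameOrbit_rank hs h1 h2]
      exact hφ i j h1 h2
  · intro φ ψ
    constructor
    · intro hs i j h1 h2
      exact sameOrbit_rank hs h1 h2
    · intro hψ
      exact ranks_to_orbit φ ψ (fun i j h1 h2 => (hψ i j h1 h2).symm)
  · intro φ r hr hiff i j h1 h2
    exact ((hiff φ).1 (refl_orbit φ) i j h1 h2).symm
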